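/- For all l ∈ [0, π_2/2], cleaf_2(l)² = cos(2θ(l)) where θ(l) = ∫_0^l cleaf_2(t) dt. -/

import Mathlib

open MeasureTheory intervalIntegral Set

namespace CleafAux

noncomputable def lf : ℝ → ℝ := fun t => 1 / Real.sqrt (1 - t ^ 4)

lemma lf_nonneg (t : ℝ) : 0 ≤ lf t := by
  unfold lf; positivity

lemma lf_pos {t : ℝ} (h0 : 0 ≤ t) (h1 : t < 1) : 0 < lf t := by
  have h4 : t ^ 4 < 1 := by
    calc t ^ 4 ≤ t ^ 1 := pow_le_pow_of_le_one h0 h1.le (by norm_num)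
    _ = t := pow_one t
    _ < 1 := h1
  unfold lf
  have : 0 < Real.sqrt (1 - t ^ 4) := Real.sqrt_pos.2 (by linarith)
  positivity

lemma lf_meas : Measurable lf := by
  have h : Continuous fun t : ℝ => Real.sqrt (1 - t ^ 4) :=
    Real.continuous_sqrt.comp (by continuity)
  exact measurable_const.div h.measurable

lemma lf_contAt {x : ℝ} (h0 : -1 < x) (h1 : x < 1) : ContinuousAt lf x := by
  have h2 : x ^ 2 < 1 := by nlinarith
  have h4 : x ^ 4 < 1 := by nlinarith [sq_nonneg x, sq_nonneg (x ^ 2)]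
  have hs : Continuous fun t : ℝ => Real.sqrt (1 - t ^ 4) :=
    Real.continuous_sqrt.comp (by continuity)
  exact ContinuousAt.div continuousAt_const hs.continuousAt
    (ne_of_gt (Real.sqrt_pos.2 (by linarith)))

lemma lf_intble {a : ℝ} (ha : 0 ≤ a) : IntervalIntegrable lf volume a 1 := by
  rcases le_or_gt 1 a with h | h
  · apply (_root_.intervalIntegrable_const (c := (0:ℝ)) (μ := volume) (a := a) (b := 1)).mono_fun
      lf_meas.aestronglyMeasurable ?_
    filter_upwards [ae_restrict_mem measurableSet_uIoc] with t ht
    rw [uIoc_of_ge h] at ht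
    have ht1 : 1 < t := ht.1
    have h2 : 1 < t ^ 2 := by nlinarith
    have h4 : 1 < t ^ 4 := by nlinarith
    have : Real.sqrt (1 - t ^ 4) = 0 := Real.sqrt_eq_zero'.2 (by linarith)
    simp [lf, this]
  · have hg : IntervalIntegrable (fun t : ℝ => (1 - t) ^ (-(1/2) : ℝ)) volume a 1 := by
      have := (intervalIntegrable_rpow' (r := (-(1/2) : ℝ)) (by norm_num)
        (a := 1 - a) (b := 1 - 1)).comp_sub_left 1
      simpa using this
    apply hg.mono_fun (lf_meas.aestronglyMeasurable)
    · filter_upwards [ae_restrict_mem measurableSet_uIoc] with t ht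
      rw [uIoc_of_le h.le] at ht
      obtain ⟨ht1, ht2⟩ := ht
      have ht0 : 0 < t := lt_of_le_of_lt ha ht1
      have h1t : 0 ≤ 1 - t := by linarith
      have hle : 1 - t ≤ 1 - t ^ 4 := by
        have : t ^ 4 ≤ t ^ 1 := pow_le_pow_of_le_one ht0.le ht2 (by norm_num)
        have h1 : t ^ 1 = t := pow_one t
        linarith [h1 ▸ this]
      have hfnn : 0 ≤ lf t := lf_nonneg t
      have hgnn : (0:ℝ) ≤ (1 - t) ^ (-(1/2) : ℝ) := Real.rpow_nonneg h1t _
      rw [Real.norm_of_nonneg hfnn, Real.norm_of_nonneg hgnn]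
      have hrw : (1 - t) ^ (-(1/2) : ℝ) = 1 / Real.sqrt (1 - t) := by
        rw [Real.rpow_neg h1t, Real.sqrt_eq_rpow]
        norm_num
      rw [hrw]
      unfold lf
      rcases eq_or_lt_of_le ht2 with rfl | ht2'
      · simp
      · apply one_div_le_one_div_of_le
        · exact Real.sqrt_pos.2 (by linarith)
        · exact Real.sqrt_le_sqrt hle

noncomputable def lF : ℝ → ℝ := fun a => ∫ t in a..1, lf t

lemma lf_intble' {a b : ℝ} (ha : 0 ≤ a) (hb : 0 ≤ b) :
    IntervalIntegrable lf volume a b :=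
  (lf_intble ha).trans (lf_intble hb).symm

lemma lF_strictAnti : StrictAntiOn lF (Icc 0 1) := by
  intro a ha b hb hab
  have hadd : (∫ t in a..b, lf t) + ∫ t in b..1, lf t = ∫ t in a..1, lf t :=
    integral_add_adjacent_intervals (lf_intble' ha.1 hb.1) (lf_intble hb.1)
  have hpos : 0 < ∫ t in a..b, lf t := by
    refine intervalIntegral_pos_of_pos_on (lf_intble' ha.1 hb.1) (fun x hx => ?_) hab
    exact lf_pos (le_trans ha.1 hx.1.le) (lt_of_lt_of_le hx.2 hb.2)
  show lF b < lF a
  unfold lF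
  linarith [hadd]

lemma lF_one : lF 1 = 0 := by simp [lF]

lemma lF_nonneg {y : ℝ} (hy : y ≤ 1) : 0 ≤ lF y :=
  integral_nonneg hy fun x _ => lf_nonneg x

lemma lF_le {y : ℝ} (hy : y ∈ Icc (0:ℝ) 1) : lF y ≤ lF 0 := by
  have hadd : (∫ t in (0:ℝ)..y, lf t) + ∫ t in y..1, lf t = ∫ t in (0:ℝ)..1, lf t :=
    integral_add_adjacent_intervals (lf_intble' le_rfl hy.1) (lf_intble hy.1)
  have h0 : 0 ≤ ∫ t in (0:ℝ)..y, lf t := integral_nonneg hy.1 fun x _ => lf_nonneg x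
  show lF y ≤ lF 0
  unfold lF
  linarith

end CleafAux

open MeasureTheory intervalIntegral Set CleafAux in
theorem cleaf_sq_eq_cos (π₂ : ℝ) (hπ : π₂ = 2 * ∫ t in (0:ℝ)..1, 1 / Real.sqrt (1 - t ^ 4))
    (cleaf : ℝ → ℝ)
    (hc : ∀ l ∈ Set.Icc 0 (π₂ / 2), cleaf l ∈ Set.Icc (0:ℝ) 1 ∧
      (∫ t in (cleaf l)..1, 1 / Real.sqrt (1 - t ^ 4)) = l) :
    ∀ l ∈ Set.Icc 0 (π₂ / 2),
      (cleaf l) ^ 2 = Real.cos (2 * ∫ t in (0:ℝ)..l, cleaf t) := by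
  have hlF0 : lF 0 = ∫ t in (0:ℝ)..1, 1 / Real.sqrt (1 - t ^ 4) := rfl
  set h := π₂ / 2 with hh_def
  have hπ2 : h = lF 0 := by rw [hh_def, hπ, hlF0]; ring
  have h0h : (0:ℝ) ≤ h := hπ2 ▸ lF_nonneg zero_le_one
  set S := Set.Icc (0:ℝ) h with hS_def
  have hmem : ∀ l ∈ S, cleaf l ∈ Set.Icc (0:ℝ) 1 := fun l hl => (hc l hl).1
  have hF : ∀ l ∈ S, lF (cleaf l) = l := fun l hl => (hc l hl).2
  have hinj := lF_strictAnti.injOn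
  have hanti : StrictAntiOn cleaf S := by
    intro a ha b hb hab
    rcases lt_trichotomy (cleaf b) (cleaf a) with hlt | heq | hgt
    · exact hlt
    · exact absurd (by rw [← hF a ha, ← hF b hb, heq]) hab.ne
    · have := lF_strictAnti (hmem a ha) (hmem b hb) hgt
      rw [hF a ha, hF b hb] at this; linarith
  have h0S : (0:ℝ) ∈ S := ⟨le_rfl, h0h⟩
  have hhS : h ∈ S := ⟨h0h, le_rfl⟩
  have hone : (1:ℝ) ∈ Set.Icc (0:ℝ) 1 := ⟨zero_le_one, le_rfl⟩
  have hzero : (0:ℝ) ∈ Set.Icc (0:ℝ) 1 := ⟨le_rfl, zero_le_one⟩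
  have hc0 : cleaf 0 = 1 := hinj (hmem 0 h0S) hone (by rw [hF 0 h0S, lF_one])
  have hch : cleaf h = 0 := hinj (hmem h hhS) hzero (by rw [hF h hhS, ← hπ2])
  have hsurj : Set.SurjOn cleaf S (Set.Icc 0 1) := by
    intro y hy
    have hyS : lF y ∈ S := ⟨lF_nonneg hy.2, hπ2 ▸ lF_le hy⟩
    exact ⟨lF y, hyS, hinj (hmem _ hyS) hy (hF _ hyS)⟩
  -- continuity of cleaf on S
  have hcontS : ContinuousOn cleaf S := by
    rcases eq_or_lt_of_le h0h with hEq | hpos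
    · intro a ha
      have hsing : S = {0} := by rw [hS_def, ← hEq, Set.Icc_self]
      rw [hsing] at ha ⊢
      rw [Set.mem_singleton_iff] at ha; subst ha
      exact continuousWithinAt_singleton
    · have hmono : StrictMonoOn (fun x => -cleaf x) S := fun x hx y hy hxy =>
        neg_lt_neg (hanti hx hy hxy)
      have himg : ∀ z ∈ Set.Icc (-1:ℝ) 0, z ∈ (fun x => -cleaf x) '' S := by
        intro z hz
        obtain ⟨x, hxS, hx⟩ := hsurj (show -z ∈ Set.Icc (0:ℝ) 1 from
          ⟨neg_nonneg.2 hz.2, by linarith [hz.1]⟩)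
        exact ⟨x, hxS, by simp [hx]⟩
      have hright : ∀ a ∈ S, a < h → ContinuousWithinAt cleaf (Set.Ici a) a := by
        intro a ha hah
        have hs : S ∈ nhdsWithin a (Set.Ici a) := Icc_mem_nhdsGE_of_mem ⟨ha.1, hah⟩
        have hca_pos : 0 < cleaf a := by rw [← hch]; exact hanti ha hhS hah
        have hfs : (fun x => -cleaf x) '' S ∈ nhdsWithin (-cleaf a) (Set.Ici (-cleaf a)) := by
          refine Filter.mem_of_superset
            (Ico_mem_nhdsGE (show -cleaf a < 0 by linarith)) ?_
          intro z hz
          exact himg z ⟨by linarith [hz.1, (hmem a ha).2], hz.2.le⟩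
        have h2 : ContinuousWithinAt (fun x => -(-cleaf x)) (Set.Ici a) a :=
          (hmono.continuousWithinAt_right_of_image_mem_nhdsWithin hs hfs).neg
        simpa using h2
      have hleft : ∀ a ∈ S, 0 < a → ContinuousWithinAt cleaf (Set.Iic a) a := by
        intro a ha h0a
        have hs : S ∈ nhdsWithin a (Set.Iic a) := Icc_mem_nhdsLE_of_mem ⟨h0a, ha.2⟩
        have hca_lt : cleaf a < 1 := by rw [← hc0]; exact hanti h0S ha h0a
        have hfs : (fun x => -cleaf x) '' S ∈ nhdsWithin (-cleaf a) (Set.Iic (-cleaf a)) := by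
          refine Filter.mem_of_superset
            (Ioc_mem_nhdsLE (show (-1:ℝ) < -cleaf a by linarith)) ?_
          intro z hz
          exact himg z ⟨hz.1.le, by linarith [hz.2, (hmem a ha).1]⟩
        have h2 : ContinuousWithinAt (fun x => -(-cleaf x)) (Set.Iic a) a :=
          (hmono.continuousWithinAt_left_of_image_mem_nhdsWithin hs hfs).neg
        simpa using h2
      intro a ha
      rcases eq_or_lt_of_le ha.1 with h0a | h0a
      · exact (hright a ha (by rw [← h0a]; exact hpos)).mono
          (fun x hx => by rw [← h0a]; exact hx.1)
      rcases eq_or_lt_of_le ha.2 with hah | hah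
      · exact (hleft a ha h0a).mono (fun x hx => hx.2.trans hah.ge)
      · exact ((hleft a ha h0a).union (hright a ha hah)).mono
          (fun x hx => le_total x a)
  -- H and its derivative
  set H : ℝ → ℝ := fun u => 2 * (∫ t in (0:ℝ)..u, cleaf t) - Real.arccos ((cleaf u) ^ 2)
    with hH_def
  have huIcc : Set.uIcc (0:ℝ) h = S := Set.uIcc_of_le h0h
  have hcint : IntervalIntegrable cleaf volume 0 h := by
    apply ContinuousOn.intervalIntegrable
    rw [huIcc]; exact hcontS
  have hθcont : ContinuousOn (fun u => ∫ t in (0:ℝ)..u, cleaf t) S := by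
    rw [← huIcc]
    exact continuousOn_primitive_interval' hcint Set.left_mem_uIcc
  have hHcont : ContinuousOn H S :=
    (continuousOn_const.mul hθcont).sub
      (Real.continuous_arccos.comp_continuousOn (hcontS.pow 2))
  have hHderiv : ∀ x ∈ Set.Ioo (0:ℝ) h, HasDerivAt H 0 x := by
    intro x hx
    have hxS : x ∈ S := ⟨hx.1.le, hx.2.le⟩
    have hcx1 : 0 < cleaf x := by rw [← hch]; exact hanti hxS hhS hx.2
    have hcx2 : cleaf x < 1 := by rw [← hc0]; exact hanti h0S hxS hx.1
    have h4pos : 0 < 1 - (cleaf x) ^ 4 := by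
      have := pow_lt_one₀ hcx1.le hcx2 (n := 4) (by norm_num)
      linarith
    have hsq : Real.sqrt (1 - (cleaf x) ^ 4) ≠ 0 := ne_of_gt (Real.sqrt_pos.2 h4pos)
    have hcontAt : ContinuousAt cleaf x := hcontS.continuousAt (Icc_mem_nhds hx.1 hx.2)
    have hFd : HasDerivAt lF (-(lf (cleaf x))) (cleaf x) :=
      (integral_hasStrictDerivAt_left (lf_intble hcx1.le)
        lf_meas.stronglyMeasurable.stronglyMeasurableAtFilter
        (lf_contAt (by linarith) hcx2)).hasDerivAt
    have hfg : ∀ᶠ y in nhds x, lF (cleaf y) = y := by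
      filter_upwards [Icc_mem_nhds hx.1 hx.2] with y hy using hF y hy
    have hlf_ne : lf (cleaf x) ≠ 0 := ne_of_gt (lf_pos hcx1.le hcx2)
    have hcd : HasDerivAt cleaf ((-(lf (cleaf x)))⁻¹) x :=
      hFd.of_local_left_inverse hcontAt (neg_ne_zero.2 hlf_ne) hfg
    have hinv : (-(lf (cleaf x)))⁻¹ = -Real.sqrt (1 - (cleaf x) ^ 4) := by
      unfold lf
      rw [one_div, inv_neg, inv_inv]
    rw [hinv] at hcd
    -- derivative of the integral term
    have hθint : IntervalIntegrable cleaf volume 0 x :=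
      hcint.mono_set (by rw [huIcc, Set.uIcc_of_le hx.1.le]; exact Set.Icc_subset_Icc_right hx.2.le)
    have hθmeas : StronglyMeasurableAtFilter cleaf (nhds x) :=
      ⟨Set.Ioo 0 h, Ioo_mem_nhds hx.1 hx.2,
        (hcontS.mono Set.Ioo_subset_Icc_self).aestronglyMeasurable measurableSet_Ioo⟩
    have hθd : HasDerivAt (fun u => ∫ t in (0:ℝ)..u, cleaf t) (cleaf x) x :=
      integral_hasDerivAt_right hθint hθmeas hcontAt
    -- derivative of arccos (cleaf ^ 2)
    have hne1 : (cleaf x) ^ 2 ≠ 1 := by nlinarith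
    have hnem1 : (cleaf x) ^ 2 ≠ -1 := by nlinarith
    have harc : HasDerivAt (fun u => Real.arccos ((cleaf u) ^ 2)) (2 * cleaf x) x := by
      have hcomp := (Real.hasDerivAt_arccos hnem1 hne1).comp x (hcd.pow 2)
      refine hcomp.congr_deriv ?_
      have h44 : (1 - ((cleaf x) ^ 2) ^ 2) = 1 - (cleaf x) ^ 4 := by ring
      rw [h44]
      field_simp
      norm_num
      ring
    have hHd := ((hθd.const_mul (2:ℝ)).sub harc)
    have : 2 * cleaf x - 2 * cleaf x = 0 := by ring
    rw [this] at hHd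
    exact hHd
  -- constancy of H on S
  have hconv : Convex ℝ S := convex_Icc _ _
  have hintS : interior S = Set.Ioo 0 h := interior_Icc
  have hdiff : DifferentiableOn ℝ H (interior S) := by
    rw [hintS]
    exact fun x hx => ((hHderiv x hx).differentiableAt).differentiableWithinAt
  have hderiv0 : ∀ x ∈ interior S, deriv H x = 0 := by
    rw [hintS]; exact fun x hx => (hHderiv x hx).deriv
  have hmonoH : MonotoneOn H S :=
    monotoneOn_of_deriv_nonneg hconv hHcont hdiff (fun x hx => (hderiv0 x hx).ge)
  have hantiH : AntitoneOn H S :=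
    antitoneOn_of_deriv_nonpos hconv hHcont hdiff (fun x hx => (hderiv0 x hx).le)
  have hH0 : H 0 = 0 := by
    simp [hH_def, intervalIntegral.integral_same, hc0, Real.arccos_one]
  intro l hl
  have hHl : H l = 0 :=
    le_antisymm (hH0 ▸ hantiH h0S hl hl.1) (hH0 ▸ hmonoH h0S hl hl.1)
  have harcl : Real.arccos ((cleaf l) ^ 2) = 2 * ∫ t in (0:ℝ)..l, cleaf t := by
    have := hHl
    rw [hH_def] at this
    simp only at this
    linarith
  rw [← harcl, Real.cos_arccos (by nlinarith [(hmem l hl).1]) (by nlinarith [(hmem l hl).1, (hmem l hl).2])]
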